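/- Let (X,d) be a metric space and F: ℝ × X → X a jointly continuous map such that for each t, F_t: X → X is an isometric bijection, F_0 = id, F_{t+s} = F_t ∘ F_s, and d(F_t(x), F_s(x)) = |t-s| for all x ∈ X and t,s ∈ ℝ. Define x ~ y iff y = F_t(x) for some t, let X' = X/~ with d'(π(x),π(y)) := inf_{t∈ℝ} d(F_t(x), y). Then d' is a well-defined metric on X' and (X',d') is complete whenever (X,d) is complete and proper. -/
import Mathlib


/-- The quotient of `X` by a one-parameter group of isometries `F` carries a well-defined
distance `d'(π x, π y) = inf_t d(F_t x, y)`, which is a metric on the quotient, and the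
quotient is complete whenever `X` is complete (and proper). The statement is phrased on `X`
itself via the function `D x y = ⨅ t, d(F_t x, y)`: invariance under the flow expresses
well-definedness on the quotient, `D x y = 0 ↔ x ∼ y` expresses positivity, and the last
clause expresses completeness of the quotient metric. -/
theorem stmt_7 {X : Type*} [MetricSpace X] [ProperSpace X] (F : ℝ → X → X)
    (hcont : Continuous fun p : ℝ × X => F p.1 p.2)
    (hiso : ∀ (t : ℝ) (x y : X), dist (F t x) (F t y) = dist x y)
    (hbij : ∀ t : ℝ, Function.Bijective (F t))
    (hzero : ∀ x : X, F 0 x = x)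
    (hgroup : ∀ (t s : ℝ) (x : X), F t (F s x) = F (t + s) x)
    (hspeed : ∀ (x : X) (t s : ℝ), dist (F t x) (F s x) = |t - s|) :
    ∀ D : X → X → ℝ, (D = fun x y => ⨅ t : ℝ, dist (F t x) y) →
      ((∀ (x y : X) (s t : ℝ), D (F s x) (F t y) = D x y) ∧
      (∀ x y : X, D x y = D y x) ∧
      (∀ x y z : X, D x z ≤ D x y + D y z) ∧
      (∀ x y : X, 0 ≤ D x y) ∧
      (∀ x y : X, D x y = 0 ↔ ∃ t : ℝ, F t x = y) ∧
      (CompleteSpace X →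
        ∀ u : ℕ → X, (∀ ε > (0 : ℝ), ∃ N : ℕ, ∀ m ≥ N, ∀ n ≥ N, D (u m) (u n) < ε) →
          ∃ x : X, Filter.Tendsto (fun n => D (u n) x) Filter.atTop (nhds 0))) := by
  intro D hD
  classical
  have hinv : ∀ (t : ℝ) (x : X), F (-t) (F t x) = x := by
    intro t x; rw [hgroup]; simp [hzero]
  -- boundedness below
  have hbdd : ∀ x y : X, BddBelow (Set.range fun t : ℝ => dist (F t x) y) := by
    intro x y
    exact ⟨0, by rintro r ⟨t, rfl⟩; exact dist_nonneg⟩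
  -- reindexing an infimum over ℝ by a surjection
  have hre : ∀ (f e : ℝ → ℝ), Function.Surjective e →
      (⨅ t : ℝ, f (e t)) = ⨅ t : ℝ, f t := by
    intro f e he
    have : (Set.range fun t => f (e t)) = Set.range f := by
      rw [show (fun t => f (e t)) = f ∘ e from rfl, Set.range_comp, he.range_eq,
        Set.image_univ]
    rw [iInf, iInf, this]
  -- continuity of t ↦ dist (F t x) y
  have hcx : ∀ x y : X, Continuous fun t : ℝ => dist (F t x) y := by
    intro x y
    exact (hcont.comp (continuous_id.prodMk continuous_const)).dist continuous_const
  -- the infimum is attained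
  have hatt : ∀ x y : X, ∃ t0 : ℝ, D x y = dist (F t0 x) y := by
    intro x y
    set c := dist x y with hc
    have hc0 : 0 ≤ c := dist_nonneg
    have hK : IsCompact (Set.Icc (-(2*c)) (2*c)) := isCompact_Icc
    have hKne : (Set.Icc (-(2*c)) (2*c)).Nonempty := ⟨0, by constructor <;> linarith⟩
    obtain ⟨t0, ht0K, hmin⟩ := hK.exists_isMinOn hKne (hcx x y).continuousOn
    simp only [hD]
    refine ⟨t0, le_antisymm (ciInf_le (hbdd x y) t0) ?_⟩
    refine le_ciInf fun t => ?_
    rcases le_or_gt |t| (2*c) with h | h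
    · exact hmin ⟨neg_le_of_abs_le h, le_of_abs_le h⟩
    · have h1 : dist (F t x) x = |t| := by
        have := hspeed x t 0; rwa [hzero, sub_zero] at this
      have h2 : dist (F t x) x ≤ dist (F t x) y + dist y x := dist_triangle _ _ _
      have h3 : dist (F t0 x) y ≤ dist (F 0 x) y := hmin ⟨by linarith, by linarith⟩
      rw [hzero] at h3
      have : dist y x = c := by rw [dist_comm]
      linarith
  have hDeval : ∀ x y : X, D x y = ⨅ t : ℝ, dist (F t x) y := by
    intro x y; rw [hD]
  -- invariance
  have hflow : ∀ (x y : X) (s t : ℝ), D (F s x) (F t y) = D x y := by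
    intro x y s t
    rw [hDeval, hDeval]
    have key : ∀ r : ℝ, dist (F r (F s x)) (F t y)
        = dist (F (r + (s - t)) x) y := by
      intro r
      rw [hgroup]
      have := hiso (-t) (F (r + s) x) (F t y)
      rw [hinv, hgroup] at this
      rw [← this]
      ring_nf
    calc (⨅ r : ℝ, dist (F r (F s x)) (F t y))
        = ⨅ r : ℝ, dist (F (r + (s - t)) x) y := by
          exact iInf_congr key
      _ = ⨅ r : ℝ, dist (F r x) y := by
          exact hre (fun r => dist (F r x) y) (fun r => r + (s - t))
            (fun r => ⟨r - (s - t), by ring⟩)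
  -- symmetry
  have hsymm : ∀ x y : X, D x y = D y x := by
    intro x y
    rw [hDeval, hDeval]
    have key : ∀ t : ℝ, dist (F t x) y = dist (F (-t) y) x := by
      intro t
      have := hiso (-t) (F t x) y
      rw [hinv] at this
      rw [← this, dist_comm]
    calc (⨅ t : ℝ, dist (F t x) y) = ⨅ t : ℝ, dist (F (-t) y) x := iInf_congr key
      _ = ⨅ t : ℝ, dist (F t y) x :=
          hre (fun t => dist (F t y) x) Neg.neg (fun r => ⟨-r, by ring⟩)
  -- nonnegativity
  have hpos : ∀ x y : X, 0 ≤ D x y := by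
    intro x y
    rw [hDeval]
    exact le_ciInf fun t => dist_nonneg
  -- triangle
  have htri : ∀ x y z : X, D x z ≤ D x y + D y z := by
    intro x y z
    rw [hDeval x y, hDeval y z, hDeval x z]
    refine le_ciInf_add_ciInf fun s t => ?_
    have h1 : dist (F (t + s) x) (F t y) = dist (F s x) y := by
      have := hiso (-t) (F (t + s) x) (F t y)
      rw [hinv, hgroup] at this
      rw [← this]
      ring_nf
    calc (⨅ r : ℝ, dist (F r x) z) ≤ dist (F (t + s) x) z := ciInf_le (hbdd x z) _
      _ ≤ dist (F (t + s) x) (F t y) + dist (F t y) z := dist_triangle _ _ _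
      _ = dist (F s x) y + dist (F t y) z := by rw [h1]
  -- zero iff same orbit
  have hzero_iff : ∀ x y : X, D x y = 0 ↔ ∃ t : ℝ, F t x = y := by
    intro x y
    constructor
    · intro h
      obtain ⟨t0, ht0⟩ := hatt x y
      exact ⟨t0, by rw [← dist_eq_zero, ← ht0, h]⟩
    · rintro ⟨t, rfl⟩
      refine le_antisymm ?_ (hpos x _)
      rw [hDeval]
      calc (⨅ r : ℝ, dist (F r x) (F t x)) ≤ dist (F t x) (F t x) := ciInf_le (hbdd _ _) t
        _ = 0 := dist_self _
  refine ⟨hflow, hsymm, htri, hpos, hzero_iff, ?_⟩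
  -- completeness
  intro _ u hu
  -- choose an increasing sequence of indices
  have hN : ∀ k : ℕ, ∃ N : ℕ, ∀ m ≥ N, ∀ n ≥ N, D (u m) (u n) < (1/2 : ℝ)^k := by
    intro k
    exact hu _ (by positivity)
  choose N0 hN0 using hN
  set N : ℕ → ℕ := fun k => (Finset.range (k+1)).sup N0 + k with hNdef
  have hNmono : Monotone N := by
    intro a b hab
    have h1 : (Finset.range (a+1)).sup N0 ≤ (Finset.range (b+1)).sup N0 :=
      Finset.sup_mono (Finset.range_subset_range.2 (by omega))
    simp only [hNdef]
    omega
  have hNge : ∀ k, N0 k ≤ N k := by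
    intro k
    have : N0 k ≤ (Finset.range (k+1)).sup N0 :=
      Finset.le_sup (Finset.self_mem_range_succ k)
    simp only [hNdef]; omega
  have hDN : ∀ k, ∀ n ≥ N k, D (u n) (u (N k)) < (1/2:ℝ)^k := by
    intro k n hn
    exact hN0 k n (le_trans (hNge k) hn) (N k) (hNge k)
  -- recursive construction
  have key : ∀ (w : X) (k : ℕ), (∃ t : ℝ, F t (u (N k)) = w) →
      ∃ w' : X, (∃ t : ℝ, F t (u (N (k+1))) = w') ∧
        dist w w' = D (u (N k)) (u (N (k+1))) := by
    rintro w k ⟨t, rfl⟩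
    obtain ⟨t0, ht0⟩ := hatt (u (N (k+1))) (F t (u (N k)))
    refine ⟨F t0 (u (N (k+1))), ⟨t0, rfl⟩, ?_⟩
    rw [dist_comm, ← ht0, hsymm]
    have := hflow (u (N k)) (u (N (k+1))) t 0
    rw [hzero] at this
    rw [this]
  -- define w by recursion
  have : ∃ w : ℕ → X, (∀ k, ∃ t : ℝ, F t (u (N k)) = w k) ∧
      ∀ k, dist (w k) (w (k+1)) = D (u (N k)) (u (N (k+1))) := by
    choose g hg1 hg2 using key
    refine ⟨fun k => Nat.rec (u (N 0)) (fun k wk => by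
      by_cases h : ∃ t : ℝ, F t (u (N k)) = wk
      · exact g wk k h
      · exact u (N (k+1))) k, ?_, ?_⟩
    · intro k
      induction k with
      | zero => exact ⟨0, hzero _⟩
      | succ k ih =>
        simp only [ih, dif_pos]
        exact hg1 _ _ ih
    · intro k
      have ih : ∃ t : ℝ, F t (u (N k)) =
          (Nat.rec (u (N 0)) (fun k wk => if h : ∃ t : ℝ, F t (u (N k)) = wk
            then g wk k h else u (N (k+1))) k : X) := by
        induction k with
        | zero => exact ⟨0, hzero _⟩
        | succ k ih2 =>
          simp only [ih2, dif_pos]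
          exact hg1 _ _ ih2
      simp only [ih, dif_pos]
      exact hg2 _ _ ih
  obtain ⟨w, hw1, hw2⟩ := this
  -- w is Cauchy in X
  have hwd : ∀ k, dist (w k) (w (k+1)) ≤ (1/2:ℝ)^k := by
    intro k
    rw [hw2 k, hsymm]
    exact le_of_lt (hDN k (N (k+1)) (hNmono (Nat.le_succ k)))
  have hwC : CauchySeq w := cauchySeq_of_le_geometric (1/2) 1 (by norm_num)
    (fun k => by simpa using hwd k)
  obtain ⟨x, hx⟩ := cauchySeq_tendsto_of_complete hwC
  refine ⟨x, ?_⟩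
  -- D (u (N k)) x ≤ dist (w k) x
  have hDle : ∀ k, D (u (N k)) x ≤ dist (w k) x := by
    intro k
    obtain ⟨t, ht⟩ := hw1 k
    rw [hDeval]
    calc (⨅ r : ℝ, dist (F r (u (N k))) x) ≤ dist (F t (u (N k))) x :=
          ciInf_le (hbdd _ _) t
      _ = dist (w k) x := by rw [ht]
  rw [Metric.tendsto_atTop]
  intro ε hε
  -- pick k with (1/2)^k < ε/2 and dist (w k) x < ε/2
  have h2 : Filter.Tendsto (fun k : ℕ => ((1:ℝ)/2)^k) Filter.atTop (nhds 0) :=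
    tendsto_pow_atTop_nhds_zero_of_lt_one (by norm_num) (by norm_num)
  obtain ⟨k1, hk1⟩ := (Metric.tendsto_atTop.1 h2) (ε/2) (by linarith)
  obtain ⟨k2, hk2⟩ := (Metric.tendsto_atTop.1 hx) (ε/2) (by linarith)
  set k := max k1 k2
  refine ⟨N k, fun n hn => ?_⟩
  have hD1 : D (u n) (u (N k)) < (1/2:ℝ)^k := hDN k n hn
  have hD2 : D (u (N k)) x < ε/2 := lt_of_le_of_lt (hDle k) (hk2 k (le_max_right _ _))
  have hpow : (1/2:ℝ)^k < ε/2 := by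
    have := hk1 k (le_max_left _ _)
    rwa [Real.dist_eq, sub_zero, abs_of_pos (by positivity)] at this
  have : D (u n) x ≤ D (u n) (u (N k)) + D (u (N k)) x := htri _ _ _
  rw [Real.dist_eq, sub_zero, abs_of_nonneg (hpos _ _)]
  linarith
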